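/- Let S be a finite nonempty set, P a column-stochastic matrix indexed by S, r : S → ℝ a reward vector with 0 ≤ r(s) ≤ 1 for all s, and let d_b and μ be probability vectors on S. For γ ∈ [0,1) define the value vector V_γ := ∑_{t=0}^{∞} γ^t (P^t)ᵀ r (so that ν · V_γ = ∑_{t=0}^{∞} γ^t (r · P^t ν) for any vector ν), and the normalized objectives J_{d_b}(γ) := (1−γ)·∑_s d_b(s) V_γ(s) and J_μ(γ) := (1−γ)·∑_s μ(s) V_γ(s). If there exists a natural number T such that P^t d_b = P^t μ for all t ≥ T (which holds when the chain is irreducible and aperiodic, by uniqueness of the stationary distribution), then J_{d_b}(γ) − J_μ(γ) tends to 0 as γ tends to 1 from the left. -/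

import Mathlib

open Matrix Filter Topology

/-- Theorem 1 of the paper: For a finite-state column-stochastic
matrix `P`, a reward vector `r` with values in `[0,1]`, and probability vectors
`d_b` and `μ`, define for `γ ∈ [0,1)` the value vector
`V_γ = ∑_t γ^t (P^t)ᵀ r` and the normalized objectives
`J_{d_b}(γ) = (1−γ)·∑_s d_b(s) V_γ(s)` and `J_μ(γ) = (1−γ)·∑_s μ(s) V_γ(s)`.
If there is a `T` with `P^t d_b = P^t μ` for all `t ≥ T` (as holds for
irreducible aperiodic chains by uniqueness of the stationary distribution),
then `J_{d_b}(γ) − J_μ(γ) → 0` as `γ → 1⁻`. -/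
theorem stmt_3 {S : Type*} [Fintype S] [Nonempty S] [DecidableEq S]
    (P : Matrix S S ℝ)
    (hP_nonneg : ∀ s' s, 0 ≤ P s' s)
    (hP_col : ∀ s, ∑ s', P s' s = 1)
    (r : S → ℝ) (hr : ∀ s, 0 ≤ r s ∧ r s ≤ 1)
    (db μ : S → ℝ)
    (hdb_nonneg : ∀ s, 0 ≤ db s) (hdb_sum : ∑ s, db s = 1)
    (hμ_nonneg : ∀ s, 0 ≤ μ s) (hμ_sum : ∑ s, μ s = 1)
    (hT : ∃ T : ℕ, ∀ t, T ≤ t → (P ^ t) *ᵥ db = (P ^ t) *ᵥ μ) :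
    Tendsto (fun γ : ℝ =>
        (1 - γ) * (∑ s, db s * (∑' t : ℕ, γ ^ t • ((P ^ t)ᵀ *ᵥ r)) s) -
        (1 - γ) * (∑ s, μ s * (∑' t : ℕ, γ ^ t • ((P ^ t)ᵀ *ᵥ r)) s))
      (nhdsWithin 1 (Set.Ico (0 : ℝ) 1)) (nhds 0) := by
  obtain ⟨T, hT⟩ := hT
  set a : ℕ → S → ℝ := fun t => (P ^ t)ᵀ *ᵥ r with ha
  -- powers are column stochastic
  have hPpow_nonneg : ∀ t : ℕ, ∀ s' s, 0 ≤ (P ^ t) s' s := by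
    intro t
    induction t with
    | zero => intro s' s; by_cases h : s' = s <;> simp [Matrix.one_apply, h]
    | succ n ih =>
      intro s' s
      rw [pow_succ, Matrix.mul_apply]
      exact Finset.sum_nonneg fun k _ => mul_nonneg (ih s' k) (hP_nonneg k s)
  have hcol : ∀ t : ℕ, ∀ s, ∑ s', (P ^ t) s' s = 1 := by
    intro t
    induction t with
    | zero => intro s; simp [Matrix.one_apply]
    | succ n ih =>
      intro s
      rw [pow_succ]
      simp only [Matrix.mul_apply]
      rw [Finset.sum_comm]
      have hkey : ∀ j, ∑ s', (P ^ n) s' j * P j s = P j s := fun j => by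
        rw [← Finset.sum_mul, ih j, one_mul]
      simp only [hkey]
      exact hP_col s
  -- bounds on a
  have ha_nonneg : ∀ t s, 0 ≤ a t s := by
    intro t s
    exact Finset.sum_nonneg fun s' _ =>
      mul_nonneg (hPpow_nonneg t s' s) (hr s').1
  have ha_le : ∀ t s, a t s ≤ 1 := by
    intro t s
    calc a t s = ∑ s', (P ^ t) s' s * r s' := rfl
      _ ≤ ∑ s', (P ^ t) s' s * 1 :=
        Finset.sum_le_sum fun s' _ =>
          mul_le_mul_of_nonneg_left (hr s').2 (hPpow_nonneg t s' s)
      _ = 1 := by simp [hcol t s]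
  set d : ℕ → ℝ := fun t => ∑ s, (db s - μ s) * a t s with hd
  have hd0 : ∀ t, T ≤ t → d t = 0 := by
    intro t ht
    have : d t = ((P ^ t) *ᵥ db) ⬝ᵥ r - ((P ^ t) *ᵥ μ) ⬝ᵥ r := by
      have h1 : ∀ ν : S → ℝ, ∑ s, ν s * a t s = ((P ^ t) *ᵥ ν) ⬝ᵥ r := by
        intro ν
        have : ∑ s, ν s * a t s = ν ⬝ᵥ ((P ^ t)ᵀ *ᵥ r) := rfl
        rw [this, Matrix.dotProduct_mulVec, Matrix.vecMul_transpose]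
      simp only [hd, sub_mul, Finset.sum_sub_distrib, h1]
    rw [this, hT t ht, sub_self]
  have hg : Tendsto (fun γ : ℝ => (1 - γ) * ∑ t ∈ Finset.range T, γ ^ t * d t)
      (nhdsWithin 1 (Set.Ico (0 : ℝ) 1)) (nhds 0) := by
    have hc : Continuous (fun γ : ℝ => (1 - γ) * ∑ t ∈ Finset.range T, γ ^ t * d t) := by
      continuity
    have h2 := (hc.tendsto 1).mono_left
      (nhdsWithin_le_nhds (s := Set.Ico (0:ℝ) 1))
    simpa using h2
  refine Tendsto.congr' ?_ hg
  filter_upwards [self_mem_nhdsWithin] with γ hγ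
  symm
  obtain ⟨hγ0, hγ1⟩ := hγ
  have habs : |γ| < 1 := by rw [abs_of_nonneg hγ0]; exact hγ1
  have hgeo : Summable (fun t : ℕ => γ ^ t) := summable_geometric_of_lt_one hγ0 hγ1
  have hsumpt : ∀ s, Summable (fun t : ℕ => γ ^ t * a t s) := by
    intro s
    refine Summable.of_nonneg_of_le (fun t => mul_nonneg (pow_nonneg hγ0 t) (ha_nonneg t s))
      (fun t => ?_) hgeo
    calc γ ^ t * a t s ≤ γ ^ t * 1 :=
          mul_le_mul_of_nonneg_left (ha_le t s) (pow_nonneg hγ0 t)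
      _ = γ ^ t := mul_one _
  have hsumPi : Summable (fun t : ℕ => γ ^ t • a t) := by
    rw [Pi.summable]
    intro s
    simpa [smul_eq_mul] using hsumpt s
  have happly : ∀ s, (∑' t : ℕ, γ ^ t • a t) s = ∑' t : ℕ, γ ^ t * a t s := by
    intro s
    rw [tsum_apply hsumPi]
    simp [smul_eq_mul]
  have hswap : ∀ ν : S → ℝ, ∑ s, ν s * (∑' t : ℕ, γ ^ t • a t) s
      = ∑' t : ℕ, γ ^ t * ∑ s, ν s * a t s := by
    intro ν
    simp only [happly]
    have h1 : ∀ s : S, ν s * (∑' t : ℕ, γ ^ t * a t s)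
        = ∑' t : ℕ, ν s * (γ ^ t * a t s) := fun s => (tsum_mul_left).symm
    simp only [h1]
    rw [← Summable.tsum_finsetSum (fun s _ => (hsumpt s).mul_left (ν s))]
    congr 1
    ext t
    rw [Finset.mul_sum]
    congr 1; ext s; ring
  have hsd : ∀ ν : S → ℝ, Summable (fun t : ℕ => γ ^ t * ∑ s, ν s * a t s) := by
    intro ν
    have : (fun t : ℕ => γ ^ t * ∑ s, ν s * a t s)
        = fun t => ∑ s, ν s * (γ ^ t * a t s) := by
      ext t; rw [Finset.mul_sum]; congr 1; ext s; ring
    rw [this]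
    exact summable_sum fun s _ => (hsumpt s).mul_left (ν s)
  rw [show (fun t : ℕ => γ ^ t • ((P ^ t)ᵀ *ᵥ r)) = fun t => γ ^ t • a t from rfl]
  simp only [hswap]
  rw [← mul_sub, ← Summable.tsum_sub (hsd db) (hsd μ)]
  have : (fun t : ℕ => γ ^ t * ∑ s, db s * a t s - γ ^ t * ∑ s, μ s * a t s)
      = fun t => γ ^ t * d t := by
    ext t
    rw [← mul_sub, hd]
    congr 1
    rw [← Finset.sum_sub_distrib]
    congr 1; ext s; ring
  rw [this]
  rw [tsum_eq_sum (s := Finset.range T) (fun t ht => by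
    rw [hd0 t (by simpa using (by simpa [Finset.mem_range, not_lt] using ht : T ≤ t))]; ring)]
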